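/- Consider the 1-D problem γ_t = ∫_ℝ k_*(x-y)γ⁺(t,y)dy - γ⁺(t,x) with kernel k_*(x) = 1/(4σ) for 1-σ ≤ |x| ≤ 1+σ and 0 otherwise (0 < σ < 1/4), and initial data γ(0,x) = c₀ on (-1/4, 1/4), γ(0,x) = -ℓ₀ elsewhere, where 2ℓ₀ < c₀. Then for x ∈ (-1/4, 1/4) and times t before the first touching time t₁, γ(t,x) = c₀ e^{-t}; moreover for x* outside (-1/4,1/4) the energy balance ℓ₀ = c₀(1 - e^{-t₁}) ∫_{-1/4}^{1/4} k_*(x*-y) dy holds at the first touching time, the quantity ∫_{-1/4}^{1/4} k_*(x*-y)dy ≤ 1/2 with equality exactly when x* ∈ [-5/4+σ, -3/4-σ] ∪ [3/4+σ, 5/4-σ], and therefore the set first reaching zero outside (-1/4,1/4) is [-5/4+σ, -3/4-σ] ∪ [3/4+σ, 5/4-σ], disjoint from the closure of (-1/4, 1/4): the free boundary jumps. -/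

import Mathlib

open MeasureTheory Filter

lemma lip_negmax : LipschitzWith 1 (fun y : ℝ => -max y 0) := by
  have h : (fun y : ℝ => -max y 0) = fun y : ℝ => -(posPart y) := by
    funext y; simp [posPart_def]
  rw [h]
  exact (lipschitzWith_posPart (α := ℝ)).neg

lemma toReal_ofReal_max (r : ℝ) : (ENNReal.ofReal r).toReal = max r 0 := by
  rcases le_total 0 r with h | h
  · rw [ENNReal.toReal_ofReal h, max_eq_left h]
  · rw [ENNReal.ofReal_of_nonpos h, max_eq_right h]; rfl

lemma kst_as_indicators (σ : ℝ) (hσ : 0 < σ) (hσ' : σ < 1/4) (kst : ℝ → ℝ)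
    (hkst : ∀ x, kst x = if 1 - σ ≤ |x| ∧ |x| ≤ 1 + σ then 1 / (4*σ) else 0) (xs : ℝ) :
    (fun y => kst (xs - y)) = fun y =>
      (Set.Icc (xs-1-σ) (xs-1+σ)).indicator (fun _ => 1/(4*σ)) y
      + (Set.Icc (xs+1-σ) (xs+1+σ)).indicator (fun _ => 1/(4*σ)) y := by
  funext y
  rw [hkst]
  simp only [Set.indicator_apply, Set.mem_Icc]
  by_cases hb1 : xs-1-σ ≤ y ∧ y ≤ xs-1+σ
  · by_cases hb2 : xs+1-σ ≤ y ∧ y ≤ xs+1+σ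
    · exfalso; obtain ⟨a1, a2⟩ := hb1; obtain ⟨b1, b2⟩ := hb2; linarith
    · obtain ⟨a1, a2⟩ := id hb1
      rw [if_pos hb1, if_neg hb2, if_pos]
      · ring
      · rw [abs_of_nonneg (by linarith)]
        exact ⟨by linarith, by linarith⟩
  · by_cases hb2 : xs+1-σ ≤ y ∧ y ≤ xs+1+σ
    · obtain ⟨b1, b2⟩ := id hb2
      rw [if_neg hb1, if_pos hb2, if_pos]
      · ring
      · rw [abs_of_nonpos (by linarith)]
        exact ⟨by linarith, by linarith⟩
    · rw [if_neg hb1, if_neg hb2, if_neg]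
      · ring
      · rintro ⟨hA, hB⟩
        push_neg at hb1 hb2
        rcases abs_cases (xs - y) with ⟨he, _⟩ | ⟨he, _⟩
        · rw [he] at hA hB
          have := hb1 (by linarith)
          linarith
        · rw [he] at hA hB
          have := hb2 (by linarith)
          linarith

lemma integral_two_bands (σ xs : ℝ) (hσ : 0 < σ) (hσ' : σ < 1/4) (kst : ℝ → ℝ)
    (hkst : ∀ x, kst x = if 1 - σ ≤ |x| ∧ |x| ≤ 1 + σ then 1 / (4*σ) else 0) :
    ∫ y in Set.Ioo (-(1/4) : ℝ) (1/4), kst (xs - y) =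
      (1/(4*σ)) * max (min (xs-1+σ) (1/4) - max (xs-1-σ) (-(1/4))) 0
      + (1/(4*σ)) * max (min (xs+1+σ) (1/4) - max (xs+1-σ) (-(1/4))) 0 := by
  have key : ∀ c d : ℝ, ∫ y in Set.Ioo (-(1/4) : ℝ) (1/4),
      (Set.Icc c d).indicator (fun _ => 1/(4*σ)) y
      = (1/(4*σ)) * max (min d (1/4) - max c (-(1/4))) 0 := by
    intro c d
    rw [setIntegral_indicator measurableSet_Icc, setIntegral_const]
    have hv : volume (Set.Ioo (-(1/4) : ℝ) (1/4) ∩ Set.Icc c d)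
        = ENNReal.ofReal (min d (1/4) - max c (-(1/4))) := by
      rw [Set.inter_comm]
      apply le_antisymm
      · have h1 : Set.Icc c d ∩ Set.Ioo (-(1/4) : ℝ) (1/4) ⊆
            Set.Icc (max c (-(1/4))) (min d (1/4)) := by
          intro y hy
          simp only [Set.mem_inter_iff, Set.mem_Icc, Set.mem_Ioo, le_min_iff, max_le_iff] at *
          exact ⟨⟨hy.1.1, le_of_lt hy.2.1⟩, hy.1.2, le_of_lt hy.2.2⟩
        calc volume _ ≤ volume (Set.Icc (max c (-(1/4 : ℝ))) (min d (1/4))) := measure_mono h1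
        _ = _ := Real.volume_Icc
      · have h2 : Set.Ioo (max c (-(1/4 : ℝ))) (min d (1/4)) ⊆
            Set.Icc c d ∩ Set.Ioo (-(1/4) : ℝ) (1/4) := by
          intro y hy
          simp only [Set.mem_inter_iff, Set.mem_Icc, Set.mem_Ioo, lt_min_iff, max_lt_iff] at *
          exact ⟨⟨le_of_lt hy.1.1, le_of_lt hy.2.1⟩, hy.1.2, hy.2.2⟩
        calc ENNReal.ofReal (min d (1/4) - max c (-(1/4 : ℝ)))
            = volume (Set.Ioo (max c (-(1/4 : ℝ))) (min d (1/4))) := Real.volume_Ioo.symm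
        _ ≤ _ := measure_mono h2
    rw [Measure.real, hv, toReal_ofReal_max, smul_eq_mul, mul_comm]
  have hint : ∀ c d : ℝ, Integrable ((Set.Icc c d).indicator (fun _ => 1/(4*σ)))
      (volume.restrict (Set.Ioo (-(1/4) : ℝ) (1/4))) := by
    intro c d
    exact ((integrable_indicator_iff measurableSet_Icc).2
      (integrableOn_const measure_Icc_lt_top.ne)).integrableOn
  calc ∫ y in Set.Ioo (-(1/4) : ℝ) (1/4), kst (xs - y)
      = ∫ y in Set.Ioo (-(1/4) : ℝ) (1/4),
        ((Set.Icc (xs-1-σ) (xs-1+σ)).indicator (fun _ => 1/(4*σ)) y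
          + (Set.Icc (xs+1-σ) (xs+1+σ)).indicator (fun _ => 1/(4*σ)) y) := by
        rw [show (fun y => kst (xs - y)) = _ from kst_as_indicators σ hσ hσ' kst hkst xs]
    _ = _ := by
        rw [integral_add (hint _ _) (hint _ _), key, key]

lemma bands (σ xs : ℝ) (hσ : 0 < σ) (hσ' : σ < 1/4) :
    (max (min (xs-1+σ) (1/4) - max (xs-1-σ) (-(1/4))) 0
      + max (min (xs+1+σ) (1/4) - max (xs+1-σ) (-(1/4))) 0 ≤ 2*σ) ∧
    ((max (min (xs-1+σ) (1/4) - max (xs-1-σ) (-(1/4))) 0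
      + max (min (xs+1+σ) (1/4) - max (xs+1-σ) (-(1/4))) 0 = 2*σ) ↔
      xs ∈ Set.Icc (-(5/4) + σ) (-(3/4) - σ) ∪ Set.Icc ((3/4) + σ) ((5/4) - σ)) := by
  have m1a : min (xs-1+σ) (1/4) ≤ xs-1+σ := min_le_left _ _
  have m1b : min (xs-1+σ) (1/4) ≤ 1/4 := min_le_right _ _
  have m1c : xs-1-σ ≤ max (xs-1-σ) (-(1/4)) := le_max_left _ _
  have m1d : -(1/4) ≤ max (xs-1-σ) (-(1/4)) := le_max_right _ _
  have m2a : min (xs+1+σ) (1/4) ≤ xs+1+σ := min_le_left _ _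
  have m2b : min (xs+1+σ) (1/4) ≤ 1/4 := min_le_right _ _
  have m2c : xs+1-σ ≤ max (xs+1-σ) (-(1/4)) := le_max_left _ _
  have m2d : -(1/4) ≤ max (xs+1-σ) (-(1/4)) := le_max_right _ _
  rcases le_total xs 0 with hx | hx
  · have h1 : max (min (xs-1+σ) (1/4) - max (xs-1-σ) (-(1/4))) 0 = 0 :=
      max_eq_right (by linarith)
    rw [h1, zero_add]
    constructor
    · exact max_le (by linarith) (by linarith)
    · constructor
      · intro h
        have hm : min (xs+1+σ) (1/4) - max (xs+1-σ) (-(1/4)) = 2*σ := by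
          rcases max_choice (min (xs+1+σ) (1/4) - max (xs+1-σ) (-(1/4))) 0 with hc | hc <;>
            rw [hc] at h <;> linarith
        exact Or.inl (Set.mem_Icc.2 ⟨by linarith, by linarith⟩)
      · intro h
        rcases h with h | h
        · obtain ⟨ha, hb⟩ := h
          have e1 : min (xs+1+σ) (1/4) = xs+1+σ := min_eq_left (by linarith)
          have e2 : max (xs+1-σ) (-(1/4)) = xs+1-σ := max_eq_left (by linarith)
          rw [e1, e2]
          rw [max_eq_left (by linarith)]; ring
        · obtain ⟨ha, hb⟩ := h; exfalso; linarith
  · have h2 : max (min (xs+1+σ) (1/4) - max (xs+1-σ) (-(1/4))) 0 = 0 :=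
      max_eq_right (by linarith)
    rw [h2, add_zero]
    constructor
    · exact max_le (by linarith) (by linarith)
    · constructor
      · intro h
        have hm : min (xs-1+σ) (1/4) - max (xs-1-σ) (-(1/4)) = 2*σ := by
          rcases max_choice (min (xs-1+σ) (1/4) - max (xs-1-σ) (-(1/4))) 0 with hc | hc <;>
            rw [hc] at h <;> linarith
        exact Or.inr (Set.mem_Icc.2 ⟨by linarith, by linarith⟩)
      · intro h
        rcases h with h | h
        · obtain ⟨ha, hb⟩ := h; exfalso; linarith
        · obtain ⟨ha, hb⟩ := h
          have e1 : min (xs-1+σ) (1/4) = xs-1+σ := min_eq_left (by linarith)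
          have e2 : max (xs-1-σ) (-(1/4)) = xs-1-σ := max_eq_left (by linarith)
          rw [e1, e2]
          rw [max_eq_left (by linarith)]; ring

/-- Example 1: jumping phenomenon for the annular kernel
`k_* = (4σ)⁻¹ 𝟙_{1-σ ≤ |x| ≤ 1+σ}` in one dimension. -/
theorem stmt_16 (σ c₀ ℓ₀ : ℝ) (hσ : 0 < σ) (hσ' : σ < 1 / 4)
    (hc₀ : 0 < c₀) (hℓ₀ : 0 < ℓ₀) (hjump : 2 * ℓ₀ < c₀)
    (kst : ℝ → ℝ)
    (hkst : ∀ x, kst x = if 1 - σ ≤ |x| ∧ |x| ≤ 1 + σ then 1 / (4 * σ) else 0)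
    (γ : ℝ → ℝ → ℝ)
    (hγ_cont : ∀ x, ContinuousOn (fun t => γ t x) (Set.Ici 0))
    (hγ_meas : ∀ t, Measurable (γ t))
    (hpde : ∀ t > (0:ℝ), ∀ x, HasDerivAt (fun s => γ s x)
        ((∫ y, kst (x - y) * max (γ t y) 0) - max (γ t x) 0) t)
    (hinit_in : ∀ x ∈ Set.Ioo (-(1/4) : ℝ) (1/4), γ 0 x = c₀)
    (hinit_out : ∀ x ∉ Set.Ioo (-(1/4) : ℝ) (1/4), γ 0 x = -ℓ₀)
    (t₁ : ℝ) (ht₁_pos : 0 < t₁)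
    (ht₁_before : ∀ t ∈ Set.Ico (0:ℝ) t₁, ∀ x ∉ Set.Ioo (-(1/4) : ℝ) (1/4),
      γ t x < 0)
    (ht₁_touch : ∃ x ∉ Set.Ioo (-(1/4) : ℝ) (1/4), γ t₁ x = 0) :
    (∀ x ∈ Set.Ioo (-(1/4) : ℝ) (1/4), ∀ t ∈ Set.Ico (0:ℝ) t₁,
        γ t x = c₀ * Real.exp (-t)) ∧
    (∀ xs ∉ Set.Ioo (-(1/4) : ℝ) (1/4), γ t₁ xs = 0 →
        ℓ₀ = c₀ * (1 - Real.exp (-t₁)) * ∫ y in (-(1/4) : ℝ)..(1/4), kst (xs - y)) ∧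
    (∀ xs ∉ Set.Ioo (-(1/4) : ℝ) (1/4),
        (∫ y in (-(1/4) : ℝ)..(1/4), kst (xs - y)) ≤ 1 / 2 ∧
        ((∫ y in (-(1/4) : ℝ)..(1/4), kst (xs - y)) = 1 / 2 ↔
          xs ∈ Set.Icc (-(5/4) + σ) (-(3/4) - σ) ∪
            Set.Icc ((3/4) + σ) ((5/4) - σ))) ∧
    ({x | x ∉ Set.Ioo (-(1/4) : ℝ) (1/4) ∧ γ t₁ x = 0} =
        Set.Icc (-(5/4) + σ) (-(3/4) - σ) ∪ Set.Icc ((3/4) + σ) ((5/4) - σ)) ∧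
    t₁ = -Real.log (1 - 2 * ℓ₀ / c₀) := by
  -- notation
  have hJint : ∀ xs : ℝ, (∫ y in (-(1/4) : ℝ)..(1/4), kst (xs - y))
      = ∫ y in Set.Ioo (-(1/4) : ℝ) (1/4), kst (xs - y) := by
    intro xs
    rw [intervalIntegral.integral_of_le (by norm_num : (-(1/4) : ℝ) ≤ 1/4),
      integral_Ioc_eq_integral_Ioo]
  -- Part 1 : the explicit solution inside the plateau
  have hinside : ∀ x ∈ Set.Ioo (-(1/4) : ℝ) (1/4), ∀ t ∈ Set.Ico (0:ℝ) t₁,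
      γ t x = c₀ * Real.exp (-t) := by
    intro x hx
    have hder : ∀ t ∈ Set.Ioo (0:ℝ) t₁,
        HasDerivAt (fun s => γ s x) (-max (γ t x) 0) t := by
      intro t ht
      have h0 : (∫ y, kst (x - y) * max (γ t y) 0) = 0 := by
        have hz : (fun y => kst (x - y) * max (γ t y) 0) = fun _ => (0:ℝ) := by
          funext y
          by_cases hy : y ∈ Set.Ioo (-(1/4) : ℝ) (1/4)
          · have hk : kst (x - y) = 0 := by
              rw [hkst, if_neg]
              rintro ⟨h1, _⟩
              obtain ⟨hx1, hx2⟩ := hx; obtain ⟨hy1, hy2⟩ := hy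
              rcases abs_cases (x - y) with ⟨he, _⟩ | ⟨he, _⟩ <;> rw [he] at h1 <;> linarith
            rw [hk, zero_mul]
          · have hm : max (γ t y) 0 = 0 :=
              max_eq_right (le_of_lt (ht₁_before t ⟨le_of_lt ht.1, ht.2⟩ y hy))
            rw [hm, mul_zero]
        rw [hz, integral_zero]
      have h := hpde t ht.1 x
      rw [h0, zero_sub] at h
      exact h
    intro t ht
    rcases eq_or_lt_of_le ht.1 with h0 | h0
    · rw [← h0, hinit_in x hx]; simp
    have claim : ∀ s, 0 < s → s < t → 0 < γ s x →
        γ t x = γ s x * Real.exp (s - t) := by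
      intro s hs0 hst hfs
      have key := ODE_solution_unique (v := fun _ y => -max y 0) (K := 1)
        (f := fun u => γ u x) (g := fun u => γ s x * Real.exp (s - u))
        (a := s) (b := t)
        (fun _ => lip_negmax)
        ((hγ_cont x).mono (fun u hu => le_trans hs0.le hu.1))
        (fun u hu => (hder u ⟨lt_of_lt_of_le hs0 hu.1,
          lt_trans hu.2 ht.2⟩).hasDerivWithinAt)
        ((continuous_const.mul (Real.continuous_exp.comp
          (continuous_const.sub continuous_id))).continuousOn)
        ?_ ?_
      · exact key (Set.right_mem_Icc.2 hst.le)
      · intro u hu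
        have h1 : HasDerivAt (fun v : ℝ => s - v) (-1) u := (hasDerivAt_id u).const_sub s
        have h2 := (Real.hasDerivAt_exp (s - u)).comp u h1
        have h3 := h2.const_mul (γ s x)
        have hval : -max (γ s x * Real.exp (s - u)) 0 = γ s x * (Real.exp (s - u) * (-1)) := by
          rw [max_eq_left (by positivity)]; ring
        show HasDerivWithinAt (fun v => γ s x * Real.exp (s - v))
          (-max (γ s x * Real.exp (s - u)) 0) (Set.Ici u) u
        rw [hval]
        exact h3.hasDerivWithinAt
      · simp
    have cont0 : Filter.Tendsto (fun u => γ u x) (nhdsWithin 0 (Set.Ioi 0)) (nhds c₀) := by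
      have h := ((hγ_cont x) 0 (Set.mem_Ici.2 le_rfl)).mono Set.Ioi_subset_Ici_self
      exact hinit_in x hx ▸ h
    have hpos : ∀ᶠ s in nhdsWithin 0 (Set.Ioi (0:ℝ)), 0 < γ s x :=
      cont0.eventually (eventually_gt_nhds hc₀)
    have hlt : ∀ᶠ s in nhdsWithin 0 (Set.Ioi (0:ℝ)), s < t :=
      Filter.eventually_of_mem (Ioo_mem_nhdsGT h0) (fun s hs => hs.2)
    have heq : ∀ᶠ s in nhdsWithin 0 (Set.Ioi (0:ℝ)),
        γ s x * Real.exp (s - t) = γ t x := by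
      filter_upwards [hpos, hlt, self_mem_nhdsWithin] with s h1 h2 h3
      exact (claim s h3 h2 h1).symm
    have T2 : Filter.Tendsto (fun s => γ s x * Real.exp (s - t))
        (nhdsWithin 0 (Set.Ioi (0:ℝ))) (nhds (c₀ * Real.exp (0 - t))) :=
      cont0.mul (((Real.continuous_exp.comp (continuous_id.sub
        continuous_const)).tendsto 0).mono_left nhdsWithin_le_nhds)
    have T3 : Filter.Tendsto (fun s => γ s x * Real.exp (s - t))
        (nhdsWithin 0 (Set.Ioi (0:ℝ))) (nhds (γ t x)) :=
      Filter.Tendsto.congr' (heq.mono fun s hs => hs.symm) tendsto_const_nhds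
    have := tendsto_nhds_unique T3 T2
    rw [this, zero_sub]
  -- the derivative outside the plateau and the resulting formula at `t₁`
  have houtside : ∀ xs ∉ Set.Ioo (-(1/4) : ℝ) (1/4),
      γ t₁ xs = -ℓ₀ + c₀ * (∫ y in Set.Ioo (-(1/4) : ℝ) (1/4), kst (xs - y))
        * (1 - Real.exp (-t₁)) := by
    intro xs hxs
    set Jx : ℝ := ∫ y in Set.Ioo (-(1/4) : ℝ) (1/4), kst (xs - y) with hJx
    have hder : ∀ t ∈ Set.Ioo (0:ℝ) t₁,
        HasDerivAt (fun s => γ s xs) (Jx * (c₀ * Real.exp (-t))) t := by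
      intro t ht
      have hmax0 : max (γ t xs) 0 = 0 :=
        max_eq_right (ht₁_before t ⟨ht.1.le, ht.2⟩ xs hxs).le
      have hrw : (fun y => kst (xs - y) * max (γ t y) 0) =
          fun y => (Set.Ioo (-(1/4) : ℝ) (1/4)).indicator
            (fun y => kst (xs - y) * (c₀ * Real.exp (-t))) y := by
        funext y
        by_cases hy : y ∈ Set.Ioo (-(1/4) : ℝ) (1/4)
        · rw [Set.indicator_of_mem hy, hinside y hy t ⟨ht.1.le, ht.2⟩,
            max_eq_left (by positivity)]
        · rw [Set.indicator_of_notMem hy,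
            max_eq_right (ht₁_before t ⟨ht.1.le, ht.2⟩ y hy).le, mul_zero]
      have hval : (∫ y, kst (xs - y) * max (γ t y) 0) = Jx * (c₀ * Real.exp (-t)) := by
        rw [hrw, integral_indicator measurableSet_Ioo, integral_mul_const]
      have h := hpde t ht.1 xs
      rw [hval, hmax0, sub_zero] at h
      exact h
    have hcont : ContinuousOn (fun s => γ s xs) (Set.Icc 0 t₁) :=
      (hγ_cont xs).mono (fun u hu => hu.1)
    have hint : IntervalIntegrable (fun t => Jx * (c₀ * Real.exp (-t))) volume 0 t₁ :=
      (continuous_const.mul (continuous_const.mul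
        (Real.continuous_exp.comp continuous_neg))).intervalIntegrable _ _
    have hftc := intervalIntegral.integral_eq_sub_of_hasDerivAt_of_le
      ht₁_pos.le hcont hder hint
    have hexp : (∫ t in (0:ℝ)..t₁, Real.exp (-t)) = 1 - Real.exp (-t₁) := by
      have hd : ∀ u ∈ Set.uIcc (0:ℝ) t₁, HasDerivAt (fun v => -Real.exp (-v))
          (Real.exp (-u)) u := by
        intro u _
        have h1 : HasDerivAt (fun v : ℝ => -v) (-1) u := (hasDerivAt_id u).neg
        have h2 := (Real.hasDerivAt_exp (-u)).comp u h1
        have h3 := h2.neg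
        have : -(Real.exp (-u) * (-1)) = Real.exp (-u) := by ring
        rw [← this]
        exact h3
      rw [intervalIntegral.integral_eq_sub_of_hasDerivAt hd
        ((Real.continuous_exp.comp continuous_neg).intervalIntegrable _ _)]
      show -Real.exp (-t₁) - -Real.exp (-0) = 1 - Real.exp (-t₁)
      rw [neg_zero, Real.exp_zero]; ring
    have hval2 : (∫ t in (0:ℝ)..t₁, Jx * (c₀ * Real.exp (-t)))
        = Jx * (c₀ * (1 - Real.exp (-t₁))) := by
      rw [intervalIntegral.integral_const_mul, intervalIntegral.integral_const_mul, hexp]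
    rw [hval2, hinit_out xs hxs] at hftc
    linarith [hftc]
  -- the geometric bound on the kernel mass
  have hExpLt : Real.exp (-t₁) < 1 := by
    rw [Real.exp_lt_one_iff]; linarith
  have hKpos : (0:ℝ) < 1/(4*σ) := by positivity
  have hpart3 : ∀ xs : ℝ,
      (∫ y in (-(1/4) : ℝ)..(1/4), kst (xs - y)) ≤ 1 / 2 ∧
      ((∫ y in (-(1/4) : ℝ)..(1/4), kst (xs - y)) = 1 / 2 ↔
        xs ∈ Set.Icc (-(5/4) + σ) (-(3/4) - σ) ∪ Set.Icc ((3/4) + σ) ((5/4) - σ)) := by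
    intro xs
    have hcomp : (∫ y in (-(1/4) : ℝ)..(1/4), kst (xs - y)) =
        (1/(4*σ)) * (max (min (xs-1+σ) (1/4) - max (xs-1-σ) (-(1/4))) 0
          + max (min (xs+1+σ) (1/4) - max (xs+1-σ) (-(1/4))) 0) := by
      rw [hJint xs, integral_two_bands σ xs hσ hσ' kst hkst]; ring
    obtain ⟨hb1, hb2⟩ := bands σ xs hσ hσ'
    constructor
    · rw [hcomp]
      have : (1/(4*σ)) * (2*σ) = 1/2 := by field_simp; ring
      calc (1/(4*σ)) * _ ≤ (1/(4*σ)) * (2*σ) := by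
            exact mul_le_mul_of_nonneg_left hb1 hKpos.le
      _ = 1/2 := this
    · rw [hcomp]
      rw [show (1:ℝ)/2 = (1/(4*σ)) * (2*σ) by field_simp; ring]
      rw [mul_right_inj' hKpos.ne']
      exact hb2
  -- the touching point forces the energy identity with mass 1/2
  obtain ⟨x₀, hx₀, hγx₀⟩ := ht₁_touch
  have hupper : ∀ x ∉ Set.Ioo (-(1/4) : ℝ) (1/4), γ t₁ x ≤ 0 := by
    intro x hxI
    have hne : (nhdsWithin t₁ (Set.Ioo 0 t₁)).NeBot := by
      apply mem_closure_iff_nhdsWithin_neBot.1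
      rw [closure_Ioo ht₁_pos.ne]
      exact ⟨ht₁_pos.le, le_rfl⟩
    have T : Filter.Tendsto (fun u => γ u x) (nhdsWithin t₁ (Set.Ioo 0 t₁))
        (nhds (γ t₁ x)) :=
      ((hγ_cont x) t₁ ht₁_pos.le).mono (fun u hu => hu.1.le)
    exact le_of_tendsto T (Filter.eventually_of_mem self_mem_nhdsWithin
      (fun u hu => (ht₁_before u ⟨hu.1.le, hu.2⟩ x hxI).le))
  have hnotI : ∀ z : ℝ, (3/4 : ℝ) + σ ≤ z ∨ z ≤ -(3/4) - σ →
      z ∉ Set.Ioo (-(1/4) : ℝ) (1/4) := by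
    rintro z (hz | hz) ⟨h1, h2⟩ <;> linarith
  have h1notI : (1:ℝ) ∉ Set.Ioo (-(1/4) : ℝ) (1/4) := hnotI 1 (Or.inl (by linarith))
  have hJ1 : (∫ y in (-(1/4) : ℝ)..(1/4), kst ((1:ℝ) - y)) = 1/2 :=
    (hpart3 1).2.2 (Or.inr ⟨by linarith, by linarith⟩)
  have hA : (0:ℝ) < c₀ * (1 - Real.exp (-t₁)) :=
    mul_pos hc₀ (by linarith)
  have hγ1 : γ t₁ 1 = -ℓ₀ + c₀ * (1/2) * (1 - Real.exp (-t₁)) := by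
    have h := houtside 1 h1notI
    rw [← hJint 1, hJ1] at h
    exact h
  have hle1 : c₀ * (1/2) * (1 - Real.exp (-t₁)) ≤ ℓ₀ := by
    have := hupper 1 h1notI
    rw [hγ1] at this
    linarith
  have hx₀eq : ℓ₀ = c₀ * (∫ y in Set.Ioo (-(1/4) : ℝ) (1/4), kst (x₀ - y))
      * (1 - Real.exp (-t₁)) := by
    have h := houtside x₀ hx₀
    rw [hγx₀] at h
    linarith
  have hJx₀le : (∫ y in Set.Ioo (-(1/4) : ℝ) (1/4), kst (x₀ - y)) ≤ 1/2 := by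
    have := (hpart3 x₀).1
    rw [hJint x₀] at this
    exact this
  have heq : ℓ₀ = c₀ * (1 - Real.exp (-t₁)) * (1/2) := by
    have hge : ℓ₀ ≤ c₀ * (1 - Real.exp (-t₁)) * (1/2) := by
      rw [hx₀eq]
      nlinarith [hA, hJx₀le]
    have hle : c₀ * (1 - Real.exp (-t₁)) * (1/2) ≤ ℓ₀ := by nlinarith [hle1]
    linarith
  -- assemble the five parts
  refine ⟨hinside, ?_, fun xs _ => hpart3 xs, ?_, ?_⟩
  · intro xs hxs h0
    have h := houtside xs hxs
    rw [h0, ← hJint xs] at h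
    linear_combination h
  · ext x
    simp only [Set.mem_setOf_eq, Set.mem_union]
    constructor
    · rintro ⟨hxI, hx0⟩
      have h := houtside x hxI
      rw [hx0] at h
      have hJx : (∫ y in Set.Ioo (-(1/4) : ℝ) (1/4), kst (x - y)) = 1/2 := by
        have hmul : c₀ * (1 - Real.exp (-t₁)) * (∫ y in Set.Ioo (-(1/4) : ℝ) (1/4), kst (x - y))
            = c₀ * (1 - Real.exp (-t₁)) * (1/2) := by linear_combination -h + heq
        exact mul_left_cancel₀ hA.ne' hmul
      have := ((hpart3 x).2).1
      rw [hJint x] at this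
      exact this hJx
    · intro hmem
      have hxI : x ∉ Set.Ioo (-(1/4) : ℝ) (1/4) := by
        rcases hmem with h | h
        · exact hnotI x (Or.inr (by linarith [h.2]))
        · exact hnotI x (Or.inl (by linarith [h.1]))
      refine ⟨hxI, ?_⟩
      have hJx : (∫ y in Set.Ioo (-(1/4) : ℝ) (1/4), kst (x - y)) = 1/2 := by
        have := ((hpart3 x).2).2 hmem
        rw [hJint x] at this
        exact this
      have h := houtside x hxI
      rw [hJx] at h
      rw [h]
      linear_combination -heq
  · have hE2 : Real.exp (-t₁) = 1 - 2 * ℓ₀ / c₀ := by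
      field_simp
      nlinarith [heq]
    rw [← hE2, Real.log_exp]
    ring
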